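/- Let G be a pertinent group, K the subgroup generated by its three involutions, C = C_G(K), and let Q be a Sylow p-subgroup of C for some prime p. Then the normalizer N_G(Q) is a pertinent group. -/

import Mathlib

/-- A finite group is *pertinent* if it has exactly three involutions and
they are pairwise conjugate. -/
def Pertinent (G : Type*) [Group G] : Prop :=
  Finite G ∧ {g : G | orderOf g = 2}.ncard = 3 ∧
    ∀ a b : G, orderOf a = 2 → orderOf b = 2 → IsConj a b

section Aux

variable {G : Type*} [Group G]

/-- The centralizer of the closure of a set is determined by commuting with the set. -/
lemma aux_mem_centralizer_closure {S : Set G} {x : G}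
    (hx : ∀ s ∈ S, s * x = x * s) :
    x ∈ Subgroup.centralizer ((Subgroup.closure S : Subgroup G) : Set G) := by
  rw [Subgroup.mem_centralizer_iff]
  intro h hh
  rw [SetLike.mem_coe] at hh
  induction hh using Subgroup.closure_induction with
  | mem s hs => exact hx s hs
  | one => simp
  | mul a b _ _ ha hb => rw [mul_assoc, hb, ← mul_assoc, ha, mul_assoc]
  | inv a _ ha =>
      have : x * a = a * x := ha.symm
      calc a⁻¹ * x = a⁻¹ * x * a * a⁻¹ := by group
        _ = a⁻¹ * (x * a) * a⁻¹ := by group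
        _ = a⁻¹ * (a * x) * a⁻¹ := by rw [this]
        _ = x * a⁻¹ := by group

lemma aux_orderOf_conj (g s : G) : orderOf (g * s * g⁻¹) = orderOf s := by
  have h : SemiconjBy g s (g * s * g⁻¹) := by
    unfold SemiconjBy; group
  exact (h.orderOf_eq g).symm

end Aux

theorem stmt_2 (G : Type*) [Group G] (hG : Pertinent G) (p : ℕ) [Fact p.Prime]
    (Q : Sylow p (Subgroup.centralizer
        ((Subgroup.closure {g : G | orderOf g = 2} : Subgroup G) : Set G))) :
    Pertinent (Subgroup.normalizer ((Q : Subgroup _).map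
      (Subgroup.centralizer
        ((Subgroup.closure {g : G | orderOf g = 2} : Subgroup G) : Set G)).subtype : Set G)) := by
  obtain ⟨hfin, hcard, hconj⟩ := hG
  have : Finite G := hfin
  revert Q
  set S : Set G := {g : G | orderOf g = 2} with hS
  set K : Subgroup G := Subgroup.closure S with hK
  set C : Subgroup G := Subgroup.centralizer (K : Set G) with hC
  intro Q
  -- K is normal
  have hKnormal : K.Normal := by
    constructor
    intro x hx g
    induction hx using Subgroup.closure_induction with
    | mem s hs =>
        refine Subgroup.subset_closure ?_
        show orderOf (g * s * g⁻¹) = 2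
        rw [aux_orderOf_conj]; exact hs
    | one => simpa using Subgroup.one_mem K
    | mul a b _ _ ha hb =>
        have : g * (a * b) * g⁻¹ = (g * a * g⁻¹) * (g * b * g⁻¹) := by group
        rw [this]; exact Subgroup.mul_mem _ ha hb
    | inv a _ ha =>
        have : g * a⁻¹ * g⁻¹ = (g * a * g⁻¹)⁻¹ := by group
        rw [this]; exact Subgroup.inv_mem _ ha
  -- C is normal
  have hCnormal : C.Normal := by
    constructor
    intro c hc g
    rw [hC, Subgroup.mem_centralizer_iff] at hc ⊢
    intro x hx
    have hx' : g⁻¹ * x * g ∈ (K : Set G) := by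
      have := hKnormal.conj_mem x hx g⁻¹
      simpa using this
    have := hc _ hx'
    have h2 : g⁻¹ * x * g * c = c * (g⁻¹ * x * g) := this
    calc x * (g * c * g⁻¹) = g * ((g⁻¹ * x * g) * c) * g⁻¹ := by group
      _ = g * (c * (g⁻¹ * x * g)) * g⁻¹ := by rw [h2]
      _ = (g * c * g⁻¹) * x := by group
  set Q' : Subgroup G := (Q : Subgroup C).map C.subtype with hQ'
  set N : Subgroup G := Subgroup.normalizer (Q' : Set G) with hN
  -- elements of C commute with involutions
  have hcomm : ∀ c ∈ C, ∀ s : G, orderOf s = 2 → c * s = s * c := by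
    intro c hc s hs
    rw [hC, Subgroup.mem_centralizer_iff] at hc
    exact (hc s (Subgroup.subset_closure hs)).symm
  -- Frattini
  have hFrattini : N ⊔ C = ⊤ := Sylow.normalizer_sup_eq_top Q
  have hdecomp : ∀ g : G, ∃ n ∈ N, ∃ c ∈ C, g = n * c := by
    intro g
    have hg : g ∈ ((N ⊔ C : Subgroup G) : Set G) := by
      rw [hFrattini]; trivial
    rw [Subgroup.mul_normal] at hg
    obtain ⟨n, hn, c, hc, h⟩ := hg
    exact ⟨n, hn, c, hc, h.symm⟩
  -- there exists an involution
  obtain ⟨t, ht⟩ : ∃ t : G, orderOf t = 2 := by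
    have : S.Nonempty := Set.nonempty_of_ncard_ne_zero (by rw [hcard]; norm_num)
    obtain ⟨t, ht⟩ := this
    exact ⟨t, ht⟩
  -- there is an involution in N
  have hexN : ∃ y : G, y ∈ N ∧ orderOf y = 2 := by
    obtain ⟨n, hn, c, hc, hnc⟩ := hdecomp t
    have hne : n = t * c⁻¹ := by rw [hnc]; group
    -- n acts on involutions like t
    have hact : ∀ s : G, orderOf s = 2 → n * s * n⁻¹ = t * s * t⁻¹ := by
      intro s hs
      have h1 : c⁻¹ * s = s * c⁻¹ := by
        have := hcomm c hc s hs
        calc c⁻¹ * s = c⁻¹ * (s * c) * c⁻¹ := by group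
          _ = c⁻¹ * (c * s) * c⁻¹ := by rw [← this]
          _ = s * c⁻¹ := by group
      rw [hne]
      calc t * c⁻¹ * s * (t * c⁻¹)⁻¹ = t * (c⁻¹ * s) * c * t⁻¹ := by group
        _ = t * (s * c⁻¹) * c * t⁻¹ := by rw [h1]
        _ = t * s * t⁻¹ := by group
    -- n² centralizes every involution
    have hsq : n ^ 2 ∈ C := by
      apply aux_mem_centralizer_closure
      intro s hs
      have hs2 : orderOf s = 2 := hs
      have h1 : n * s * n⁻¹ = t * s * t⁻¹ := hact s hs2
      have hts : orderOf (t * s * t⁻¹) = 2 := by rw [aux_orderOf_conj]; exact hs2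
      have h2 : n * (t * s * t⁻¹) * n⁻¹ = t * (t * s * t⁻¹) * t⁻¹ := hact _ hts
      have ht1 : t * t = 1 := by
        have := pow_orderOf_eq_one t
        rwa [ht, pow_two] at this
      have h3 : t * (t * s * t⁻¹) * t⁻¹ = s := by
        calc t * (t * s * t⁻¹) * t⁻¹ = (t * t) * s * ((t * t))⁻¹ := by group
          _ = 1 * s * 1⁻¹ := by rw [ht1]
          _ = s := by group
      have h4 : n ^ 2 * s * (n ^ 2)⁻¹ = s := by
        calc n ^ 2 * s * (n ^ 2)⁻¹ = n * (n * s * n⁻¹) * n⁻¹ := by rw [pow_two]; group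
          _ = n * (t * s * t⁻¹) * n⁻¹ := by rw [h1]
          _ = s := by rw [h2, h3]
      calc s * n ^ 2 = (n ^ 2 * s * (n ^ 2)⁻¹) * n ^ 2 := by rw [h4]
        _ = n ^ 2 * s := by group
    rcases Nat.even_or_odd (orderOf n) with he | ho
    · -- even order: power of n is an involution in N
      obtain ⟨k, hk⟩ := he
      have hpos : 0 < orderOf n := orderOf_pos n
      have hkpos : 0 < k := by omega
      refine ⟨n ^ k, Subgroup.pow_mem _ hn k, ?_⟩
      have hy2 : (n ^ k) ^ 2 = 1 := by
        rw [← pow_mul]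
        have : k * 2 = orderOf n := by omega
        rw [this, pow_orderOf_eq_one]
      have hy1 : n ^ k ≠ 1 := by
        intro h1
        have := orderOf_dvd_of_pow_eq_one h1
        have hle := Nat.le_of_dvd hkpos this
        omega
      exact orderOf_eq_prime hy2 hy1
    · -- odd order: n ∈ C, hence t ∈ C, and t normalizes Q'
      obtain ⟨k, hk⟩ := ho
      have hnC : n ∈ C := by
        have h1 : n * (n ^ 2) ^ k = 1 := by
          rw [← pow_mul, ← pow_succ']
          have : 2 * k + 1 = orderOf n := by omega
          rw [this, pow_orderOf_eq_one]
        have h2 : n = ((n ^ 2) ^ k)⁻¹ := by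
          rw [eq_inv_iff_mul_eq_one]; exact h1
        rw [h2]
        exact Subgroup.inv_mem _ (Subgroup.pow_mem _ hsq k)
      have htC : t ∈ C := by
        rw [hnc]; exact Subgroup.mul_mem _ hnC hc
      refine ⟨t, ?_, ht⟩
      -- t commutes with everything in C (as t is an involution and C centralizes involutions)
      rw [hN, Subgroup.mem_normalizer_iff]
      intro q
      constructor
      · intro hq
        have hqC : q ∈ C := by
          rw [hQ'] at hq
          obtain ⟨x, _, rfl⟩ := hq
          exact x.2
        have : t * q * t⁻¹ = q := by
          have := hcomm q hqC t ht
          calc t * q * t⁻¹ = (q * t) * t⁻¹ := by rw [← this]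
            _ = q := by group
        rw [this]; exact hq
      · intro hq
        have hqC : t * q * t⁻¹ ∈ C := by
          rw [hQ'] at hq
          obtain ⟨x, _, hx⟩ := hq
          rw [← hx]; exact x.2
        have hqC' : q ∈ C := by
          have h5 := hCnormal.conj_mem _ hqC t⁻¹
          have e : t⁻¹ * (t * q * t⁻¹) * t⁻¹⁻¹ = q := by group
          rwa [e] at h5
        have heq : t * q * t⁻¹ = q := by
          have := hcomm q hqC' t ht
          calc t * q * t⁻¹ = (q * t) * t⁻¹ := by rw [← this]
            _ = q := by group
        rwa [heq] at hq
  obtain ⟨y, hyN, hy2⟩ := hexN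
  -- every involution of G lies in N
  have hall : ∀ s : G, orderOf s = 2 → s ∈ N := by
    intro s hs
    obtain ⟨g, hg⟩ := isConj_iff.mp (hconj y s hy2 hs)
    obtain ⟨n, hn, c, hc, rfl⟩ := hdecomp g
    have hcy : c * y = y * c := hcomm c hc y hy2
    have : n * y * n⁻¹ = s := by
      rw [← hg]
      calc n * y * n⁻¹ = n * (c * y) * c⁻¹ * n⁻¹ := by rw [hcy]; group
        _ = n * c * y * (n * c)⁻¹ := by group
    rw [← this]
    exact Subgroup.mul_mem _ (Subgroup.mul_mem _ hn hyN) (Subgroup.inv_mem _ hn)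
  refine ⟨inferInstance, ?_, ?_⟩
  · -- counting involutions in N
    have himg : Subtype.val '' {x : ↥N | orderOf x = 2} = S := by
      ext s
      constructor
      · rintro ⟨x, hx, rfl⟩
        show orderOf (x : G) = 2
        rw [Subgroup.orderOf_coe]
        exact hx
      · intro hs
        refine ⟨⟨s, hall s hs⟩, ?_, rfl⟩
        show orderOf (⟨s, hall s hs⟩ : ↥N) = 2
        rw [Subgroup.orderOf_mk]
        exact hs
    have := Set.ncard_image_of_injective {x : ↥N | orderOf x = 2} Subtype.val_injective
    rw [himg, hcard] at this
    exact this.symm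
  · -- conjugacy in N
    intro a b ha hb
    have ha' : orderOf (a : G) = 2 := by rw [Subgroup.orderOf_coe]; exact ha
    have hb' : orderOf (b : G) = 2 := by rw [Subgroup.orderOf_coe]; exact hb
    obtain ⟨g, hg⟩ := isConj_iff.mp (hconj (a : G) (b : G) ha' hb')
    obtain ⟨n, hn, c, hc, rfl⟩ := hdecomp g
    have hca : c * (a : G) = (a : G) * c := hcomm c hc _ ha'
    have hkey : n * (a : G) * n⁻¹ = (b : G) := by
      rw [← hg]
      calc n * (a : G) * n⁻¹ = n * (c * (a : G)) * c⁻¹ * n⁻¹ := by rw [hca]; group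
        _ = n * c * (a : G) * (n * c)⁻¹ := by group
    rw [isConj_iff]
    refine ⟨⟨n, hn⟩, ?_⟩
    apply Subtype.ext
    push_cast
    exact hkey
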